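/- Let n, u, w ≥ 1, let i ∈ {1,…,n}, and fix e ∈ F_2^n with Hamming weight wt(e) = u and e_i = 1. Then the number of vectors h ∈ F_2^n with wt(h) = w, h_i = 1, and ⟨h,e⟩ = 1 over F_2 equals Σ_{ℓ even, 0 ≤ ℓ ≤ min(w−1, u−1)} C(u−1, ℓ)·C(n−u, w−1−ℓ). -/

import Mathlib

open Finset

lemma zmod2_ne_zero : ∀ a : ZMod 2, a ≠ 0 ↔ a = 1 := by decide

lemma zmod2_natCast_eq_one (c : ℕ) : (c : ZMod 2) = 1 ↔ Odd c := by
  rw [Nat.odd_iff, ← ZMod.natCast_mod]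
  rcases Nat.mod_two_eq_zero_or_one c with h | h <;> rw [h] <;> simp

theorem unsatisfied_check_count_error_bit (n u w : ℕ)
    (hn : 1 ≤ n) (hu : 1 ≤ u) (hw : 1 ≤ w)
    (i : Fin n) (e : Fin n → ZMod 2)
    (hewt : (univ.filter (fun j : Fin n => e j ≠ 0)).card = u)
    (hei : e i = 1) :
    (univ.filter (fun h : Fin n → ZMod 2 =>
        (univ.filter (fun j : Fin n => h j ≠ 0)).card = w ∧ h i = 1 ∧
          ∑ j : Fin n, h j * e j = 1)).card
      = ∑ l ∈ Finset.range (min (w - 1) (u - 1) + 1),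
          if Even l then Nat.choose (u - 1) l * Nat.choose (n - u) (w - 1 - l) else 0 := by
  classical
  set E : Finset (Fin n) := univ.filter (fun j => e j ≠ 0) with hE
  have hiE : i ∈ E := by simp [hE, hei]
  have hcardE : E.card = u := hewt
  set A : Finset (Fin n) := E.erase i with hAdef
  have hiA : i ∉ A := notMem_erase _ _
  have hAsub : A ⊆ E := erase_subset _ _
  have hA : A.card = u - 1 := by rw [hAdef, card_erase_of_mem hiE, hcardE]
  set B : Finset (Fin n) := univ \ E with hBdef
  have hB : B.card = n - u := by
    rw [hBdef, card_sdiff_of_subset (subset_univ _), card_univ, Fintype.card_fin, hcardE]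
  have hiB : i ∉ B := by simp [hBdef, hiE]
  clear_value A B E
  have hABdisj : Disjoint A B := by
    refine disjoint_left.2 fun x hx hx' => ?_
    rw [hBdef] at hx'
    exact (mem_sdiff.1 hx').2 (hAsub hx)
  -- Step A: translate to subsets
  have stepA : (univ.filter (fun h : Fin n → ZMod 2 =>
        (univ.filter (fun j : Fin n => h j ≠ 0)).card = w ∧ h i = 1 ∧
          ∑ j : Fin n, h j * e j = 1)).card
      = (univ.filter (fun S : Finset (Fin n) =>
          S.card = w ∧ i ∈ S ∧ Odd ((S ∩ E).card))).card := by
    apply card_nbij' (fun h => univ.filter (fun j => h j ≠ 0))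
      (fun S => fun j => if j ∈ S then 1 else 0)
    · intro h hh
      simp only [mem_coe, mem_filter, mem_univ, true_and] at hh ⊢
      obtain ⟨hw1, hi1, hsum⟩ := hh
      refine ⟨hw1, by simp [hi1], ?_⟩
      have key : ∀ j, h j * e j = if j ∈ (univ.filter (fun j => h j ≠ 0)) ∩ E then 1 else 0 := by
        intro j
        by_cases h1 : h j = 0
        · simp [h1, hE]
        by_cases h2 : e j = 0
        · simp [h2, hE]
        · rw [(zmod2_ne_zero _).1 h1, (zmod2_ne_zero _).1 h2]
          simp [hE, h1, h2]
      rw [Finset.sum_congr rfl (fun j _ => key j), Finset.sum_ite_mem,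
        Finset.univ_inter, Finset.sum_const, nsmul_eq_mul, mul_one] at hsum
      exact (zmod2_natCast_eq_one _).1 hsum
    · intro S hS
      simp only [mem_coe, mem_filter, mem_univ, true_and] at hS ⊢
      obtain ⟨hSw, hiS, hodd⟩ := hS
      have hfilt : (univ.filter (fun j => (if j ∈ S then (1:ZMod 2) else 0) ≠ 0)) = S := by
        ext j; by_cases hj : j ∈ S <;> simp [hj]
      refine ⟨by rw [hfilt, hSw], by simp [hiS], ?_⟩
      have key : ∀ j, (if j ∈ S then (1:ZMod 2) else 0) * e j
          = if j ∈ S ∩ E then 1 else 0 := by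
        intro j
        by_cases h1 : j ∈ S
        · by_cases h2 : e j = 0
          · simp [h1, h2, hE]
          · rw [(zmod2_ne_zero _).1 h2]; simp [h1, h2, hE]
        · simp [h1]
      rw [Finset.sum_congr rfl (fun j _ => key j), Finset.sum_ite_mem,
        Finset.univ_inter, Finset.sum_const, nsmul_eq_mul, mul_one]
      exact (zmod2_natCast_eq_one _).2 hodd
    · intro h hh
      funext j
      by_cases hj : h j = 0
      · simp [hj]
      · beta_reduce; rw [if_pos (by simp [hj]), (zmod2_ne_zero _).1 hj]
    · intro S hS
      ext j; by_cases hj : j ∈ S <;> simp [hj]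
  rw [stepA]
  -- Step B: fiberwise count by ℓ = |S ∩ A|
  have key : ∀ S : Finset (Fin n), i ∈ S → (S ∩ E).card = (S ∩ A).card + 1 := by
    intro S hiS
    have h1 : S ∩ E = insert i (S ∩ A) := by
      rw [inter_comm, inter_comm S A, ← insert_inter_of_mem hiS, hAdef, insert_erase hiE]
    rw [h1, card_insert_of_notMem (fun hmem => hiA (mem_of_mem_inter_right hmem))]
  have hmaps : ∀ S ∈ (univ.filter (fun S : Finset (Fin n) =>
      S.card = w ∧ i ∈ S ∧ Odd ((S ∩ E).card))),
      (S ∩ A).card ∈ Finset.range (min (w - 1) (u - 1) + 1) := by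
    intro S hS
    simp only [mem_filter, mem_univ, true_and] at hS
    obtain ⟨hSw, hiS, _⟩ := hS
    rw [mem_range, Nat.lt_succ_iff, le_min_iff]
    constructor
    · have : (S ∩ E).card ≤ S.card := card_le_card inter_subset_left
      rw [key S hiS, hSw] at this
      clear * - this; omega
    · rw [← hA]; exact card_le_card inter_subset_right
  rw [card_eq_sum_card_fiberwise hmaps]
  refine Finset.sum_congr rfl fun l hl => ?_
  rw [mem_range, Nat.lt_succ_iff, le_min_iff] at hl
  by_cases hle : Even l
  · rw [if_pos hle,
      show (u-1).choose l = (powersetCard l A).card by rw [card_powersetCard, hA],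
      show (n-u).choose (w-1-l) = (powersetCard (w-1-l) B).card by rw [card_powersetCard, hB],
      ← card_product]
    apply card_nbij' (fun S => (S ∩ A, S \ E)) (fun P => insert i (P.1 ∪ P.2))
    · intro S hS
      simp only [mem_coe, mem_filter, mem_univ, true_and] at hS
      obtain ⟨⟨hSw, hiS, hodd⟩, hfib⟩ := hS
      have hk := key S hiS
      simp only [mem_coe, mem_product, mem_powersetCard]
      refine ⟨⟨inter_subset_right, hfib⟩, ⟨?_, ?_⟩⟩
      · intro x hx; simp [hBdef, (mem_sdiff.1 hx).2]
      · have := card_sdiff_add_card_inter S E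
        rw [hk, hfib, hSw] at this
        clear * - this hl hw; omega
    · intro P hP
      simp only [mem_coe, mem_product, mem_powersetCard] at hP
      obtain ⟨⟨hPA, hPcard⟩, hQB, hQcard⟩ := hP
      have hiP : i ∉ P.1 ∪ P.2 := by
        rw [mem_union]; rintro (h | h)
        · exact hiA (hPA h)
        · exact hiB (hQB h)
      have hPQdisj : Disjoint P.1 P.2 := hABdisj.mono hPA hQB
      have hcard : (insert i (P.1 ∪ P.2)).card = w := by
        rw [card_insert_of_notMem hiP, card_union_of_disjoint hPQdisj, hPcard, hQcard]
        clear * - hl hw; omega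
      have hinterA : insert i (P.1 ∪ P.2) ∩ A = P.1 := by
        ext j
        simp only [mem_inter, mem_insert, mem_union]
        constructor
        · rintro ⟨rfl | h | h, hjA⟩
          · exact absurd hjA hiA
          · exact h
          · exact absurd (hQB h) (disjoint_left.1 hABdisj hjA)
        · intro h; exact ⟨Or.inr (Or.inl h), hPA h⟩
      simp only [mem_coe, mem_filter, mem_univ, true_and]
      refine ⟨⟨hcard, mem_insert_self _ _, ?_⟩, by rw [hinterA, hPcard]⟩
      rw [key _ (mem_insert_self _ _), hinterA, hPcard]
      exact Even.add_one hle
    · intro S hS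
      simp only [mem_coe, mem_filter, mem_univ, true_and] at hS
      obtain ⟨⟨hSw, hiS, hodd⟩, hfib⟩ := hS
      ext j
      simp only [mem_insert, mem_union, mem_inter, mem_sdiff]
      constructor
      · rintro (rfl | ⟨h, _⟩ | ⟨h, _⟩) <;> assumption
      · intro hj
        by_cases hji : j = i
        · exact Or.inl hji
        · by_cases hjE : j ∈ E
          · exact Or.inr (Or.inl ⟨hj, by rw [hAdef]; exact mem_erase.2 ⟨hji, hjE⟩⟩)
          · exact Or.inr (Or.inr ⟨hj, hjE⟩)
    · intro P hP
      simp only [mem_coe, mem_product, mem_powersetCard] at hP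
      obtain ⟨⟨hPA, hPcard⟩, hQB, hQcard⟩ := hP
      have hQE : Disjoint P.2 E := by
        refine disjoint_left.2 fun x hx hx' => ?_
        have := hQB hx
        rw [hBdef] at this
        exact (mem_sdiff.1 this).2 hx'
      have hinterA : insert i (P.1 ∪ P.2) ∩ A = P.1 := by
        ext j
        simp only [mem_inter, mem_insert, mem_union]
        constructor
        · rintro ⟨rfl | h | h, hjA⟩
          · exact absurd hjA hiA
          · exact h
          · exact absurd (hQB h) (disjoint_left.1 hABdisj hjA)
        · intro h; exact ⟨Or.inr (Or.inl h), hPA h⟩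
      have hsdiff : insert i (P.1 ∪ P.2) \ E = P.2 := by
        ext j
        simp only [mem_sdiff, mem_insert, mem_union]
        constructor
        · rintro ⟨rfl | h | h, hjE⟩
          · exact absurd hiE hjE
          · exact absurd (hAsub (hPA h)) hjE
          · exact h
        · intro hj
          exact ⟨Or.inr (Or.inr hj), fun hjE => disjoint_left.1 hQE hj hjE⟩
      exact Prod.ext hinterA hsdiff
  · rw [if_neg hle, card_eq_zero, eq_empty_iff_forall_notMem]
    intro S hS
    simp only [mem_filter, mem_univ, true_and] at hS
    obtain ⟨⟨hSw, hiS, hodd⟩, hfib⟩ := hS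
    rw [key S hiS, hfib, Nat.odd_add_one] at hodd
    exact hle (Nat.not_odd_iff_even.mp hodd)
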